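/- Assume p01 ≤ p11 and β ∈ [0,1]. Let g : [0,1]^n → ℝ be affine in each coordinate and satisfy both: (A) 1 + g(ω_2,…,ω_n,ω_1) ≥ g(ω_1,…,ω_n) for all 0 ≤ ω_1 ≤ ⋯ ≤ ω_n ≤ 1, and (B) g(ω_1,…,ω_j, y, x, ω_{j+3},…,ω_n) ≥ g(ω_1,…,ω_j, x, y, ω_{j+3},…,ω_n) for all 0 ≤ ω_1 ≤ ⋯ ≤ ω_n ≤ 1, all 0 ≤ j ≤ n−2, and all x ≥ y in [0,1]. Define f : [0,1]^n → ℝ by f(ω_1,…,ω_n) = Σ_{i=n−k+1}^n ω_i + β · Σ_{l ∈ {0,1}^k} q(l; (ω_{n−k+1},…,ω_n)) · g(v_l), where v_l consists of (k−|l|) copies of p01, then τ(ω_1),…,τ(ω_{n−k}), then |l| copies of p11. Then f satisfies (B): f(ω_1,…,ω_j, y, x, ω_{j+3},…,ω_n) ≥ f(ω_1,…,ω_j, x, y, ω_{j+3},…,ω_n) for all 0 ≤ ω_1 ≤ ⋯ ≤ ω_n ≤ 1, all 0 ≤ j ≤ n−2, and all x ≥ y in [0,1]. -/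

import Mathlib

open Finset

noncomputable section

/-- The one-step belief update for an unobserved channel. -/
def tauF (p01 p11 : ℝ) (w : ℝ) : ℝ := w * p11 + (1 - w) * p01

/-- The set of admissible actions: subsets of `Fin n` of cardinality `k`. -/
def actions (n k : ℕ) : Finset (Finset (Fin n)) :=
  (Finset.univ : Finset (Fin n)).powersetCard k

lemma actions_nonempty {n k : ℕ} (hk : k ≤ n) : (actions n k).Nonempty := by
  rw [actions, Finset.powersetCard_nonempty, Finset.card_univ, Fintype.card_fin]
  exact hk

/-- Number of `true` entries in a `{0,1}^k` realization. -/
def countTrue {k : ℕ} (l : Fin k → Bool) : ℕ :=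
  (Finset.univ.filter fun i => l i = true).card

/-- `q(l; u) = ∏ u_i^{l_i} (1-u_i)^{1-l_i}`. -/
def qProb {k : ℕ} (u : Fin k → ℝ) (l : Fin k → Bool) : ℝ :=
  ∏ i : Fin k, if l i then u i else 1 - u i

/-- The top `k` coordinates `(ω_{n-k+1}, …, ω_n)` of a length-`n` vector. -/
def topCoords {n k : ℕ} (hk : k ≤ n) (ω : Fin n → ℝ) : Fin k → ℝ :=
  fun i => ω ⟨n - k + i.val, by omega⟩

/-- The vector `v_l`: `k - m` copies of `p01`, then `τ(ω_1),…,τ(ω_{n-k})`,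
then `m` copies of `p11`, where `m` is the number of ones in `l`. -/
def vl {n : ℕ} (k : ℕ) (p01 p11 : ℝ) (ω : Fin n → ℝ) (m : ℕ) : Fin n → ℝ :=
  fun j =>
    if j.val < k - m then p01
    else if j.val < n - m then tauF p01 p11 (ω ⟨j.val - (k - m), by omega⟩)
    else p11

/-- The greedy-policy value functions `W`, indexed by the number of remaining
steps (`r = 0` corresponds to the terminal time `T`). -/
def Wval (n k : ℕ) (hk : k ≤ n) (p01 p11 β : ℝ) : ℕ → (Fin n → ℝ) → ℝ
  | 0, ω => ∑ i : Fin n, if n - k ≤ i.val then ω i else 0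
  | r + 1, ω =>
      (∑ i : Fin n, if n - k ≤ i.val then ω i else 0) +
        β * ∑ l : Fin k → Bool,
          qProb (topCoords hk ω) l *
            Wval n k hk p01 p11 β r (vl k p01 p11 ω (countTrue l))

/-- The updated information state `ω^{a,s}`. -/
def nextState {n : ℕ} (p01 p11 : ℝ) (ω : Fin n → ℝ) (a : Finset (Fin n))
    (s : {i // i ∈ a} → Bool) : Fin n → ℝ :=
  fun j => if h : j ∈ a then (if s ⟨j, h⟩ then p11 else p01) else tauF p01 p11 (ω j)

/-- The probability of the realization `s` of the selected channels `a`. -/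
def obsProb {n : ℕ} (ω : Fin n → ℝ) (a : Finset (Fin n))
    (s : {i // i ∈ a} → Bool) : ℝ :=
  ∏ i : {i // i ∈ a}, if s i then ω i.val else 1 - ω i.val

/-- The optimal value functions `V`, indexed by the number of remaining steps. -/
def Vval (n k : ℕ) (hk : k ≤ n) (p01 p11 β : ℝ) : ℕ → (Fin n → ℝ) → ℝ
  | 0, ω => (actions n k).sup' (actions_nonempty hk) fun a => ∑ i ∈ a, ω i
  | r + 1, ω =>
      (actions n k).sup' (actions_nonempty hk) fun a =>
        (∑ i ∈ a, ω i) +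
          β * ∑ s : {i // i ∈ a} → Bool,
            obsProb ω a s * Vval n k hk p01 p11 β r (nextState p01 p11 ω a s)

/-- `Q_t(ω, a)`: the value of taking action `a` now and acting optimally
afterwards, indexed by the number of remaining steps. -/
def Qval (n k : ℕ) (hk : k ≤ n) (p01 p11 β : ℝ) : ℕ → (Fin n → ℝ) → Finset (Fin n) → ℝ
  | 0, ω, a => ∑ i ∈ a, ω i
  | r + 1, ω, a =>
      (∑ i ∈ a, ω i) +
        β * ∑ s : {i // i ∈ a} → Bool,
          obsProb ω a s * Vval n k hk p01 p11 β r (nextState p01 p11 ω a s)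

/-- Replace the coordinates in positions `j` and `j+1` (`0`-indexed) by `x` and `y`. -/
def upd2 {n : ℕ} (ω : Fin n → ℝ) (j : ℕ) (hj : j + 1 < n) (x y : ℝ) : Fin n → ℝ :=
  Function.update (Function.update ω ⟨j, by omega⟩ x) ⟨j + 1, hj⟩ y

/-- The cyclic shift `(ω_2, …, ω_n, ω_1)`. -/
def cyc {n : ℕ} (hn : 0 < n) (ω : Fin n → ℝ) : Fin n → ℝ :=
  fun j => ω ⟨(j.val + 1) % n, Nat.mod_lt _ hn⟩

end


noncomputable section MyAuxST9

lemma tauF_mem {p01 p11 : ℝ} (hord : p01 ≤ p11) {w : ℝ}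
    (hw : w ∈ Set.Icc (0:ℝ) 1) : tauF p01 p11 w ∈ Set.Icc p01 p11 := by
  obtain ⟨h0, h1⟩ := hw
  constructor <;> simp only [tauF] <;> nlinarith

lemma tauF_mono {p01 p11 : ℝ} (hord : p01 ≤ p11) {w w' : ℝ} (h : w ≤ w') :
    tauF p01 p11 w ≤ tauF p01 p11 w' := by
  simp only [tauF]; nlinarith

/-- generic "p01 block, tau block, p11 block" vector -/
def stepVec {n : ℕ} (p01 p11 : ℝ) (ω : Fin n → ℝ) (c d : ℕ) : Fin n → ℝ :=
  fun j => if j.val < c then p01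
    else if j.val < d then tauF p01 p11 (ω ⟨j.val - c, lt_of_le_of_lt (Nat.sub_le _ _) j.isLt⟩)
    else p11

lemma vl_eq_stepVec {n k : ℕ} (p01 p11 : ℝ) (ω : Fin n → ℝ) (m : ℕ) :
    vl k p01 p11 ω m = stepVec p01 p11 ω (k - m) (n - m) := rfl

lemma stepVec_mem {n : ℕ} {p01 p11 : ℝ} (hp01 : p01 ∈ Set.Icc (0:ℝ) 1)
    (hp11 : p11 ∈ Set.Icc (0:ℝ) 1) (hord : p01 ≤ p11) {ω : Fin n → ℝ}
    (hω : ∀ i, ω i ∈ Set.Icc (0:ℝ) 1) (c d : ℕ) :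
    ∀ i, stepVec p01 p11 ω c d i ∈ Set.Icc (0:ℝ) 1 := by
  intro i
  unfold stepVec
  split_ifs with h1 h2
  · exact hp01
  · exact ⟨le_trans hp01.1 (tauF_mem hord (hω _)).1,
      le_trans (tauF_mem hord (hω _)).2 hp11.2⟩
  · exact hp11

lemma stepVec_mono {n : ℕ} {p01 p11 : ℝ} (hord : p01 ≤ p11) {ω : Fin n → ℝ}
    (hmono : Monotone ω) (hω : ∀ i, ω i ∈ Set.Icc (0:ℝ) 1) {c d : ℕ} (_hcd : c ≤ d) :
    Monotone (stepVec p01 p11 ω c d) := by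
  intro a b hab
  have hab' : a.val ≤ b.val := hab
  have ht : ∀ i : Fin n, tauF p01 p11 (ω i) ∈ Set.Icc p01 p11 :=
    fun i => tauF_mem hord (hω i)
  unfold stepVec
  split_ifs with h1 h2 h3 h4 h5 h6 h7 h8
  any_goals rfl
  any_goals omega
  · exact (ht _).1
  · exact tauF_mono hord (hmono (show (⟨a.val - c, _⟩ : Fin n) ≤ ⟨b.val - c, _⟩ from by
      simp only [Fin.mk_le_mk]; omega))
  · exact (ht _).2

lemma qProb_total : ∀ (k : ℕ) (u : Fin k → ℝ), ∑ l : Fin k → Bool, qProb u l = 1 := by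
  intro k
  induction k with
  | zero =>
    intro u
    simp [qProb]
  | succ k ih =>
    intro u
    rw [← Equiv.sum_comp (Fin.consEquiv (fun _ : Fin (k+1) => Bool)) (qProb u)]
    rw [Fintype.sum_prod_type]
    have hq : ∀ (b : Bool) (l : Fin k → Bool),
        qProb u ((Fin.consEquiv (fun _ : Fin (k+1) => Bool)) (b, l)) =
          (if b then u 0 else 1 - u 0) * qProb (fun i => u i.succ) l := by
      intro b l
      simp [qProb, Fin.consEquiv, Fin.prod_univ_succ]
    simp_rw [hq, ← Finset.mul_sum, ih]
    rw [Fintype.sum_bool]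
    norm_num

lemma qProb_nonneg {k : ℕ} {u : Fin k → ℝ} (hu : ∀ i, u i ∈ Set.Icc (0:ℝ) 1)
    (l : Fin k → Bool) : 0 ≤ qProb u l := by
  apply Finset.prod_nonneg
  intro i _
  split
  · exact (hu i).1
  · linarith [(hu i).2]

lemma countTrue_le {k : ℕ} (l : Fin k → Bool) : countTrue l ≤ k := by
  have := Finset.card_filter_le (Finset.univ : Finset (Fin k)) (fun i => l i = true)
  simpa [countTrue] using this

lemma upd2_apply {n : ℕ} (ω : Fin n → ℝ) (j : ℕ) (hj : j + 1 < n) (x y : ℝ) (i : Fin n) :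
    upd2 ω j hj x y i = if i.val = j + 1 then y else if i.val = j then x else ω i := by
  unfold upd2
  rw [Function.update_apply, Function.update_apply]
  simp only [Fin.ext_iff]

lemma key_swap {n k : ℕ} {p01 p11 : ℝ} (hk1 : 1 ≤ k) (hkn : k + 1 ≤ n)
    (hp01 : p01 ∈ Set.Icc (0:ℝ) 1) (hp11 : p11 ∈ Set.Icc (0:ℝ) 1) (hord : p01 ≤ p11)
    (g : (Fin n → ℝ) → ℝ)
    (hA : ∀ ω : Fin n → ℝ, Monotone ω → (∀ i, ω i ∈ Set.Icc (0:ℝ) 1) →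
      1 + g (cyc (by omega) ω) ≥ g ω)
    (hB : ∀ ω : Fin n → ℝ, Monotone ω → (∀ i, ω i ∈ Set.Icc (0:ℝ) 1) →
      ∀ (j : ℕ) (hj : j + 1 < n), ∀ x y : ℝ,
        x ∈ Set.Icc (0:ℝ) 1 → y ∈ Set.Icc (0:ℝ) 1 → y ≤ x →
          g (upd2 ω j hj y x) ≥ g (upd2 ω j hj x y))
    (ω : Fin n → ℝ) (hmono : Monotone ω) (hω : ∀ i, ω i ∈ Set.Icc (0:ℝ) 1)
    (m : ℕ) (hm : m + 1 ≤ k) :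
    g (Function.update (vl k p01 p11 ω m) ⟨n - m - 1, by omega⟩ p11) ≤
      1 + g (Function.update (vl k p01 p11 ω (m+1)) ⟨n - m - 2, by omega⟩ p01) := by
  have hn : 0 < n := by omega
  set B : Fin n → ℝ := stepVec p01 p11 ω (k - m - 1) (n - m - 2) with hBdef
  have hBmono : Monotone B := stepVec_mono hord hmono hω (by omega)
  have hBmem : ∀ i, B i ∈ Set.Icc (0:ℝ) 1 := stepVec_mem hp01 hp11 hord hω _ _
  set D : ℕ → Fin n → ℝ := fun a j => if j.val = n - 1 - a then p01 else B j with hDdef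
  have hV : Function.update (vl k p01 p11 ω m) ⟨n - m - 1, by omega⟩ p11
      = stepVec p01 p11 ω (k - m) (n - m - 1) := by
    funext i
    rw [Function.update_apply]
    simp only [vl, stepVec, Fin.ext_iff]
    split_ifs <;>
      first
        | rfl | omega | (exfalso; omega)
        | exact congrArg (fun z : Fin n => tauF p01 p11 (ω z)) (Fin.ext (by dsimp only; omega))
  have hV2 : Function.update (vl k p01 p11 ω (m+1)) ⟨n - m - 2, by omega⟩ p01 = D (m+1) := by
    funext i
    rw [Function.update_apply]
    simp only [vl, stepVec, Fin.ext_iff, hDdef, hBdef]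
    split_ifs <;>
      first
        | rfl | omega | (exfalso; omega)
        | exact congrArg (fun z : Fin n => tauF p01 p11 (ω z)) (Fin.ext (by dsimp only; omega))
  have hD0 : D 0 = cyc hn (stepVec p01 p11 ω (k - m) (n - m - 1)) := by
    funext i
    simp only [hDdef, hBdef, cyc, stepVec]
    rcases Nat.lt_or_ge (i.val + 1) n with h | h
    · have hmod : (i.val + 1) % n = i.val + 1 := Nat.mod_eq_of_lt h
      split_ifs <;>
        first
          | rfl | omega | (exfalso; omega)
          | exact congrArg (fun z : Fin n => tauF p01 p11 (ω z)) (Fin.ext (by dsimp only; omega))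
    · have hmod : (i.val + 1) % n = 0 := by
        have hin : i.val + 1 = n := by omega
        simp [hin]
      split_ifs <;>
        first
          | rfl | omega | (exfalso; omega)
          | exact congrArg (fun z : Fin n => tauF p01 p11 (ω z)) (Fin.ext (by dsimp only; omega))
  have hstep : ∀ a, a ≤ m → g (D a) ≤ g (D (a+1)) := by
    intro a ha
    have hj' : (n - 2 - a) + 1 < n := by omega
    have h1 : D a = upd2 B (n - 2 - a) hj' p11 p01 := by
      funext i
      rw [upd2_apply]
      simp only [hDdef, hBdef, stepVec]
      split_ifs <;>
        first
          | rfl | omega | (exfalso; omega)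
          | exact congrArg (fun z : Fin n => tauF p01 p11 (ω z)) (Fin.ext (by dsimp only; omega))
    have h2 : D (a+1) = upd2 B (n - 2 - a) hj' p01 p11 := by
      funext i
      rw [upd2_apply]
      simp only [hDdef, hBdef, stepVec]
      split_ifs <;>
        first
          | rfl | omega | (exfalso; omega)
          | exact congrArg (fun z : Fin n => tauF p01 p11 (ω z)) (Fin.ext (by dsimp only; omega))
    rw [h1, h2]
    exact hB B hBmono hBmem _ hj' p11 p01 hp11 hp01 hord
  have hchain : ∀ a, a ≤ m + 1 → g (D 0) ≤ g (D a) := by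
    intro a
    induction a with
    | zero => intro _; exact le_refl _
    | succ a ih => intro ha; exact le_trans (ih (by omega)) (hstep a (by omega))
  have hVmono : Monotone (stepVec p01 p11 ω (k-m) (n-m-1)) :=
    stepVec_mono hord hmono hω (by omega)
  have hVmem := stepVec_mem hp01 hp11 hord hω (k-m) (n-m-1)
  have h1 : 1 + g (cyc hn (stepVec p01 p11 ω (k-m) (n-m-1)))
      ≥ g (stepVec p01 p11 ω (k-m) (n-m-1)) :=
    hA (stepVec p01 p11 ω (k-m) (n-m-1)) hVmono hVmem
  rw [hV, hV2]
  have h2 := hchain (m+1) (le_refl _)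
  rw [hD0] at h2
  linarith

end MyAuxST9

set_option maxHeartbeats 3200000 in
/-- induction step for inequality (B) of Lemma 3.  If `g` is
affine in each coordinate and satisfies (A) and (B), then the one-step backward
recursion `f` satisfies (B): for sorted `ω ∈ [0,1]^n`, `0 ≤ j ≤ n-2`, and
`x ≥ y` in `[0,1]`, `f(…, y, x, …) ≥ f(…, x, y, …)`. -/
theorem induction_step_B
    (n k : ℕ) (hk1 : 1 ≤ k) (hkn : k ≤ n)
    (p01 p11 β : ℝ)
    (hp01 : p01 ∈ Set.Icc (0:ℝ) 1) (hp11 : p11 ∈ Set.Icc (0:ℝ) 1)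
    (hβ : β ∈ Set.Icc (0:ℝ) 1) (hord : p01 ≤ p11)
    (g : (Fin n → ℝ) → ℝ)
    (haffine : ∀ ω : Fin n → ℝ, (∀ j, ω j ∈ Set.Icc (0:ℝ) 1) → ∀ i : Fin n,
      ∀ x ∈ Set.Icc (0:ℝ) 1,
        g (Function.update ω i x) =
          (1 - x) * g (Function.update ω i 0) + x * g (Function.update ω i 1))
    (hA : ∀ ω : Fin n → ℝ, Monotone ω → (∀ i, ω i ∈ Set.Icc (0:ℝ) 1) →
      1 + g (cyc (by omega) ω) ≥ g ω)
    (hB : ∀ ω : Fin n → ℝ, Monotone ω → (∀ i, ω i ∈ Set.Icc (0:ℝ) 1) →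
      ∀ (j : ℕ) (hj : j + 1 < n), ∀ x y : ℝ,
        x ∈ Set.Icc (0:ℝ) 1 → y ∈ Set.Icc (0:ℝ) 1 → y ≤ x →
          g (upd2 ω j hj y x) ≥ g (upd2 ω j hj x y))
    (f : (Fin n → ℝ) → ℝ)
    (hf : ∀ ω : Fin n → ℝ,
      f ω = (∑ i : Fin n, if n - k ≤ i.val then ω i else 0) +
        β * ∑ l : Fin k → Bool,
          qProb (topCoords hkn ω) l * g (vl k p01 p11 ω (countTrue l))) :
    ∀ ω : Fin n → ℝ, Monotone ω → (∀ i, ω i ∈ Set.Icc (0:ℝ) 1) →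
      ∀ (j : ℕ) (hj : j + 1 < n), ∀ x y : ℝ,
        x ∈ Set.Icc (0:ℝ) 1 → y ∈ Set.Icc (0:ℝ) 1 → y ≤ x →
          f (upd2 ω j hj y x) ≥ f (upd2 ω j hj x y) := by
  intro ω hmono hω j hj x y hx hy hxy
  set ω' := upd2 ω j hj x y with hw'
  set ω'' := upd2 ω j hj y x with hw''
  have hω' : ∀ i, ω' i ∈ Set.Icc (0:ℝ) 1 := by
    intro i; rw [hw', upd2_apply]; split_ifs
    · exact hy
    · exact hx
    · exact hω i
  have hω'' : ∀ i, ω'' i ∈ Set.Icc (0:ℝ) 1 := by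
    intro i; rw [hw'', upd2_apply]; split_ifs
    · exact hx
    · exact hy
    · exact hω i
  have hIcc : Set.Icc p01 p11 ⊆ Set.Icc (0:ℝ) 1 := Set.Icc_subset_Icc hp01.1 hp11.2
  have hvmem : ∀ m : ℕ, ∀ i, vl k p01 p11 ω m i ∈ Set.Icc (0:ℝ) 1 := by
    intro m; rw [vl_eq_stepVec]; exact stepVec_mem hp01 hp11 hord hω _ _
  have hvmono : ∀ m : ℕ, Monotone (vl k p01 p11 ω m) := by
    intro m; rw [vl_eq_stepVec]; exact stepVec_mono hord hmono hω (by omega)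
  rw [ge_iff_le, hf ω', hf ω'']
  rcases lt_trichotomy (j+1) (n-k) with hcase | hcase | hcase
  · -- Case 1 : both positions feed the tau block
    have hsum1 : (∑ i : Fin n, if n - k ≤ i.val then ω' i else 0)
        = ∑ i : Fin n, if n - k ≤ i.val then ω'' i else 0 := by
      apply Finset.sum_congr rfl
      intro i _
      rw [hw', hw'', upd2_apply, upd2_apply]
      split_ifs <;> first | rfl | omega | (exfalso; omega)
    have htop : topCoords hkn ω' = topCoords hkn ω'' := by
      funext i
      simp only [topCoords, hw', hw'', upd2_apply]
      split_ifs <;> first | rfl | omega | (exfalso; omega)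
    rw [hsum1, htop]
    apply add_le_add_right
    apply mul_le_mul_of_nonneg_left _ hβ.1
    apply Finset.sum_le_sum
    intro l _
    apply mul_le_mul_of_nonneg_left _ (qProb_nonneg (fun i => hω'' _) l)
    set mL := countTrue l with hmL
    have hm : mL ≤ k := countTrue_le l
    have hj2 : (j + (k - mL)) + 1 < n := by omega
    have e1 : vl k p01 p11 ω' mL
        = upd2 (vl k p01 p11 ω mL) (j + (k - mL)) hj2 (tauF p01 p11 x) (tauF p01 p11 y) := by
      funext i
      rw [upd2_apply]
      simp only [vl, hw', upd2_apply]
      split_ifs <;>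
        first
          | rfl | omega | (exfalso; omega)
          | exact congrArg (fun z : Fin n => tauF p01 p11 (ω z)) (Fin.ext (by dsimp only; omega))
    have e2 : vl k p01 p11 ω'' mL
        = upd2 (vl k p01 p11 ω mL) (j + (k - mL)) hj2 (tauF p01 p11 y) (tauF p01 p11 x) := by
      funext i
      rw [upd2_apply]
      simp only [vl, hw'', upd2_apply]
      split_ifs <;>
        first
          | rfl | omega | (exfalso; omega)
          | exact congrArg (fun z : Fin n => tauF p01 p11 (ω z)) (Fin.ext (by dsimp only; omega))
    rw [e1, e2]
    exact hB (vl k p01 p11 ω mL) (hvmono mL) (hvmem mL) _ hj2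
      (tauF p01 p11 x) (tauF p01 p11 y) (hIcc (tauF_mem hord hx)) (hIcc (tauF_mem hord hy))
      (tauF_mono hord hxy)
  · -- Case 3 : boundary between tau block and top block
    have hkn1 : k + 1 ≤ n := by omega
    set u := topCoords hkn ω with hu
    have humem : ∀ i : Fin k, u i ∈ Set.Icc (0:ℝ) 1 := by
      intro i; rw [hu]; exact hω _
    set i0 : Fin k := ⟨0, by omega⟩ with hi0
    set G : ℕ → ℝ → ℝ := fun m t =>
      g (Function.update (vl k p01 p11 ω m) ⟨n - m - 1, by omega⟩ t) with hG
    set r : (Fin k → Bool) → ℝ :=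
      fun l => ∏ i ∈ Finset.univ.erase i0, (if l i then u i else 1 - u i) with hr
    have hrnn : ∀ l, 0 ≤ r l := by
      intro l
      rw [hr]
      apply Finset.prod_nonneg
      intro i _
      split
      · exact (humem i).1
      · linarith [(humem i).2]
    have htop' : topCoords hkn ω' = Function.update u i0 y := by
      funext i
      rw [Function.update_apply]
      simp only [topCoords, hu, hw', upd2_apply, hi0, Fin.ext_iff]
      split_ifs <;> first | rfl | omega | (exfalso; omega)
    have htop'' : topCoords hkn ω'' = Function.update u i0 x := by
      funext i
      rw [Function.update_apply]
      simp only [topCoords, hu, hw'', upd2_apply, hi0, Fin.ext_iff]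
      split_ifs <;> first | rfl | omega | (exfalso; omega)
    have hqdec : ∀ (z : ℝ) (l : Fin k → Bool),
        qProb (Function.update u i0 z) l = (if l i0 then z else 1 - z) * r l := by
      intro z l
      simp only [qProb, hr]
      rw [← Finset.mul_prod_erase Finset.univ
        (fun i => if l i then Function.update u i0 z i else 1 - Function.update u i0 z i)
        (Finset.mem_univ i0)]
      rw [Function.update_self]
      congr 1
      apply Finset.prod_congr rfl
      intro i hi
      rw [Function.update_of_ne (Finset.mem_erase.mp hi).1]
    have hgvl' : ∀ m, m ≤ k → g (vl k p01 p11 ω' m) = G m (tauF p01 p11 x) := by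
      intro m hm
      simp only [hG]
      congr 1
      funext i
      rw [Function.update_apply]
      simp only [vl, hw', upd2_apply, Fin.ext_iff]
      split_ifs <;> first
        | rfl | omega | (exfalso; omega)
        | exact congrArg (fun z : Fin n => tauF p01 p11 (ω z)) (Fin.ext (by dsimp only; omega))
    have hgvl'' : ∀ m, m ≤ k → g (vl k p01 p11 ω'' m) = G m (tauF p01 p11 y) := by
      intro m hm
      simp only [hG]
      congr 1
      funext i
      rw [Function.update_apply]
      simp only [vl, hw'', upd2_apply, Fin.ext_iff]
      split_ifs <;> first
        | rfl | omega | (exfalso; omega)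
        | exact congrArg (fun z : Fin n => tauF p01 p11 (ω z)) (Fin.ext (by dsimp only; omega))
    have haff : ∀ (m : ℕ), m ≤ k → ∀ w : ℝ, w ∈ Set.Icc (0:ℝ) 1 →
        G m (tauF p01 p11 w) = (1 - w) * G m p01 + w * G m p11 := by
      intro m hm w hw
      have e0 := haffine _ (hvmem m) ⟨n - m - 1, by omega⟩ (tauF p01 p11 w)
        (hIcc (tauF_mem hord hw))
      have e1 := haffine _ (hvmem m) ⟨n - m - 1, by omega⟩ p01 hp01
      have e2 := haffine _ (hvmem m) ⟨n - m - 1, by omega⟩ p11 hp11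
      simp only [hG]
      rw [e0, e1, e2]
      simp only [tauF]
      ring
    have hA1 : (∑ l : Fin k → Bool,
          qProb (topCoords hkn ω') l * g (vl k p01 p11 ω' (countTrue l)))
        = ∑ l : Fin k → Bool, ((if l i0 then y else 1 - y) * r l)
            * ((1 - x) * G (countTrue l) p01 + x * G (countTrue l) p11) := by
      apply Finset.sum_congr rfl
      intro l _
      rw [htop', hqdec y l, hgvl' _ (countTrue_le l), haff _ (countTrue_le l) x hx]
    have hA2 : (∑ l : Fin k → Bool,
          qProb (topCoords hkn ω'') l * g (vl k p01 p11 ω'' (countTrue l)))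
        = ∑ l : Fin k → Bool, ((if l i0 then x else 1 - x) * r l)
            * ((1 - y) * G (countTrue l) p01 + y * G (countTrue l) p11) := by
      apply Finset.sum_congr rfl
      intro l _
      rw [htop'', hqdec x l, hgvl'' _ (countTrue_le l), haff _ (countTrue_le l) y hy]
    have hsum1 : (∑ i : Fin n, if n - k ≤ i.val then ω'' i else 0)
        = (∑ i : Fin n, if n - k ≤ i.val then ω' i else 0) + (x - y) := by
      have h1 : ∀ i : Fin n, (if n - k ≤ i.val then ω'' i else 0)
          - (if n - k ≤ i.val then ω' i else 0)
          = if i = (⟨j+1, hj⟩ : Fin n) then x - y else 0 := by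
        intro i
        rw [hw', hw'', upd2_apply, upd2_apply]
        simp only [Fin.ext_iff]
        split_ifs <;> first | ring1 | omega | (exfalso; omega)
      have h2 : (∑ i : Fin n, ((if n - k ≤ i.val then ω'' i else 0)
          - (if n - k ≤ i.val then ω' i else 0))) = x - y := by
        simp_rw [h1]
        simp
      rw [Finset.sum_sub_distrib] at h2
      linarith
    set S : ℝ := ∑ l : Fin k → Bool,
      r l * (if l i0 then G (countTrue l) p01 else -(G (countTrue l) p11)) with hS
    have hdiff : (∑ l : Fin k → Bool, ((if l i0 then x else 1 - x) * r l)
            * ((1 - y) * G (countTrue l) p01 + y * G (countTrue l) p11))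
        - (∑ l : Fin k → Bool, ((if l i0 then y else 1 - y) * r l)
            * ((1 - x) * G (countTrue l) p01 + x * G (countTrue l) p11))
        = (x - y) * S := by
      rw [hS, Finset.mul_sum, ← Finset.sum_sub_distrib]
      apply Finset.sum_congr rfl
      intro l _
      cases hl : l i0 <;> simp <;> ring_nf
    have hcount : ∀ l : Fin k → Bool, countTrue l
        = (∑ i ∈ Finset.univ.erase i0, (if l i then 1 else 0))
          + (if l i0 then 1 else 0) := by
      intro l
      rw [countTrue, Finset.card_filter]
      exact (Finset.sum_erase_add Finset.univ (fun i => if l i then 1 else 0)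
        (Finset.mem_univ i0)).symm
    have hflip : Function.Involutive
        (fun (l : Fin k → Bool) => fun i => if i = i0 then !(l i) else l i) := by
      intro l
      funext i
      by_cases h : i = i0 <;> simp [h]
    set E : Equiv.Perm (Fin k → Bool) := Function.Involutive.toPerm _ hflip with hEdef
    set H : (Fin k → Bool) → ℝ := fun l =>
      r l * ((if l i0 then (1:ℝ) else 0)
        + β * (if l i0 then G (countTrue l) p01 else -(G (countTrue l) p11))) with hH
    have hpair : ∀ l : Fin k → Bool, 0 ≤ H l + H (E l) := by
      intro l
      set R : ℕ := ∑ i ∈ Finset.univ.erase i0, (if l i then 1 else 0) with hR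
      have hRk : R + 1 ≤ k := by
        have h3 : R ≤ ∑ i ∈ Finset.univ.erase i0, 1 := by
          rw [hR]; exact Finset.sum_le_sum (fun i _ => by split <;> omega)
        rw [Finset.sum_const, smul_eq_mul, mul_one,
          Finset.card_erase_of_mem (Finset.mem_univ i0), Finset.card_univ,
          Fintype.card_fin] at h3
        omega
      have hEl : ∀ i : Fin k, E l i = if i = i0 then !(l i) else l i := by
        intro i; rfl
      have hrE : r (E l) = r l := by
        rw [hr]
        apply Finset.prod_congr rfl
        intro i hi
        rw [hEl i, if_neg (Finset.mem_erase.mp hi).1]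
      have hcE : countTrue (E l) = R + (if l i0 then 0 else 1) := by
        rw [hcount (E l), hR]
        congr 1
        · apply Finset.sum_congr rfl
          intro i hi
          rw [hEl i, if_neg (Finset.mem_erase.mp hi).1]
        · rw [hEl i0, if_pos rfl]
          cases hl : l i0 <;> simp [hl]
      have hkey : G R p11 ≤ 1 + G (R + 1) p01 := by
        simp only [hG]
        exact key_swap hk1 hkn1 hp01 hp11 hord g hA hB ω hmono hω R (by omega)
      have hin : (0:ℝ) ≤ 1 + β * (G (R + 1) p01 - G R p11) := by
        have h5 : (0:ℝ) ≤ β * (1 + G (R + 1) p01 - G R p11) :=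
          mul_nonneg hβ.1 (by linarith)
        linarith [hβ.2]
      have hEi0 : E l i0 = !(l i0) := by rw [hEl i0, if_pos rfl]
      cases hl : l i0
      · have hc1 : countTrue l = R := by rw [hcount l, hl, hR]; simp
        have hc2 : countTrue (E l) = R + 1 := by rw [hcE, hl]; simp
        have hEt : E l i0 = true := by rw [hEi0, hl]; rfl
        simp only [hH, hrE, hc1, hc2, hEt, hl]
        simp only [Bool.false_eq_true, if_false, if_true]
        linarith [mul_nonneg (hrnn l) hin]
      · have hc1 : countTrue l = R + 1 := by rw [hcount l, hl, hR]; simp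
        have hc2 : countTrue (E l) = R := by rw [hcE, hl]; simp
        have hEt : E l i0 = false := by rw [hEi0, hl]; rfl
        simp only [hH, hrE, hc1, hc2, hEt, hl]
        simp only [Bool.false_eq_true, if_false, if_true]
        linarith [mul_nonneg (hrnn l) hin]
    have hSpos : (0:ℝ) ≤ 1 + β * S := by
      have h1 : (1:ℝ) + β * S = ∑ l : Fin k → Bool, H l := by
        have h0 : (1:ℝ) = ∑ l : Fin k → Bool, qProb (Function.update u i0 1) l :=
          (qProb_total k _).symm
        rw [hS, Finset.mul_sum, h0, ← Finset.sum_add_distrib]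
        apply Finset.sum_congr rfl
        intro l _
        rw [hqdec 1 l]
        simp only [hH]
        cases hl : l i0 <;> simp <;> ring_nf
      have h2 : (0:ℝ) ≤ ∑ l : Fin k → Bool, (H l + H (E l)) :=
        Finset.sum_nonneg (fun l _ => hpair l)
      rw [Finset.sum_add_distrib] at h2
      have h4 := Equiv.sum_comp E H
      rw [h4] at h2
      rw [h1]
      linarith
    rw [hA1, hA2, hsum1]
    have h6 : (0:ℝ) ≤ (x - y) * (1 + β * S) :=
      mul_nonneg (by linarith) hSpos
    have h7 : β * (∑ l : Fin k → Bool, ((if l i0 then x else 1 - x) * r l)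
            * ((1 - y) * G (countTrue l) p01 + y * G (countTrue l) p11))
        = β * (∑ l : Fin k → Bool, ((if l i0 then y else 1 - y) * r l)
            * ((1 - x) * G (countTrue l) p01 + x * G (countTrue l) p11))
          + β * ((x - y) * S) := by
      linear_combination β * hdiff
    linarith [h7, h6]
  · -- Case 2 : both positions in the top block
    have hjn : n - k ≤ j := by omega
    set a : Fin n := ⟨j, by omega⟩ with ha
    set b : Fin n := ⟨j+1, hj⟩ with hb
    have hab : a ≠ b := by simp [ha, hb, Fin.ext_iff]
    have hba : b ≠ a := by simp [ha, hb, Fin.ext_iff]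
    have hsum1 : (∑ i : Fin n, if n - k ≤ i.val then ω' i else 0)
        = ∑ i : Fin n, if n - k ≤ i.val then ω'' i else 0 := by
      have h1 : ∀ i : Fin n,
          (if n - k ≤ i.val then ω' i else 0) - (if n - k ≤ i.val then ω'' i else 0)
          = if i = a then x - y else if i = b then y - x else 0 := by
        intro i
        rw [hw', hw'', upd2_apply, upd2_apply]
        simp only [ha, hb, Fin.ext_iff]
        split_ifs <;> first | ring1 | omega | (exfalso; omega)
      have h2 : (∑ i : Fin n, ((if n - k ≤ i.val then ω' i else 0)
          - (if n - k ≤ i.val then ω'' i else 0))) = 0 := by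
        simp_rw [h1]
        rw [← Finset.sum_subset (Finset.subset_univ ({a, b} : Finset (Fin n)))]
        · rw [Finset.sum_pair hab]
          simp [hab, hba]
        · intro i _ hi
          simp only [Finset.mem_insert, Finset.mem_singleton, not_or] at hi
          simp [hi.1, hi.2]
      rw [Finset.sum_sub_distrib] at h2
      linarith
    set i0 : Fin k := ⟨j - (n-k), by omega⟩ with hi0
    set i1 : Fin k := ⟨j + 1 - (n-k), by omega⟩ with hi1
    have htop : ∀ i : Fin k,
        topCoords hkn ω' (Equiv.swap i0 i1 i) = topCoords hkn ω'' i := by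
      intro i
      rcases eq_or_ne i i0 with rfl | h0
      · rw [Equiv.swap_apply_left]
        simp only [topCoords, hw', hw'', upd2_apply, hi0, hi1]
        split_ifs <;> first | rfl | omega | (exfalso; omega)
      rcases eq_or_ne i i1 with rfl | h1
      · rw [Equiv.swap_apply_right]
        simp only [topCoords, hw', hw'', upd2_apply, hi0, hi1]
        split_ifs <;> first | rfl | omega | (exfalso; omega)
      · rw [Equiv.swap_apply_of_ne_of_ne h0 h1]
        have h0v : ¬ i.val = j - (n-k) := by
          intro hv; exact h0 (by rw [hi0]; exact Fin.ext hv)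
        have h1v : ¬ i.val = j + 1 - (n-k) := by
          intro hv; exact h1 (by rw [hi1]; exact Fin.ext hv)
        simp only [topCoords, hw', hw'', upd2_apply]
        split_ifs <;> first | rfl | omega | (exfalso; omega)
    have hvl : ∀ m : ℕ, m ≤ k → vl k p01 p11 ω' m = vl k p01 p11 ω'' m := by
      intro m hm
      funext i
      simp only [vl, hw', hw'', upd2_apply]
      split_ifs <;> first | rfl | omega | (exfalso; omega)
    have hq : ∀ l : Fin k → Bool,
        qProb (topCoords hkn ω') (fun i => l (Equiv.swap i0 i1 i))
          = qProb (topCoords hkn ω'') l := by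
      intro l
      unfold qProb
      rw [← Equiv.prod_comp (Equiv.swap i0 i1)
        (fun i => if l (Equiv.swap i0 i1 i) then topCoords hkn ω' i
          else 1 - topCoords hkn ω' i)]
      apply Finset.prod_congr rfl
      intro i _
      simp only [Equiv.swap_apply_self]
      rw [htop i]
    have hc : ∀ l : Fin k → Bool,
        countTrue (fun i => l (Equiv.swap i0 i1 i)) = countTrue l := by
      intro l
      unfold countTrue
      rw [Finset.card_filter, Finset.card_filter]
      exact Equiv.sum_comp (Equiv.swap i0 i1) (fun i => if l i = true then 1 else 0)
    have hinv : Function.Involutive (fun (l : Fin k → Bool) => fun i => l (Equiv.swap i0 i1 i)) := by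
      intro l
      funext i
      exact congrArg l (Equiv.swap_apply_self i0 i1 i)
    have hsum2 : (∑ l : Fin k → Bool,
          qProb (topCoords hkn ω') l * g (vl k p01 p11 ω' (countTrue l)))
        = ∑ l : Fin k → Bool,
          qProb (topCoords hkn ω'') l * g (vl k p01 p11 ω'' (countTrue l)) := by
      rw [← Equiv.sum_comp hinv.toPerm
        (fun l => qProb (topCoords hkn ω') l * g (vl k p01 p11 ω' (countTrue l)))]
      apply Finset.sum_congr rfl
      intro l _
      simp only [Function.Involutive.coe_toPerm]
      rw [hq l, hc l, hvl (countTrue l) (countTrue_le l)]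
    rw [hsum1, hsum2]
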